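/- arXiv:2003.08334 — 5 statements merged into one kernel-verified Lean document; each statement's English description precedes it below -/
import Mathlib

section
/- Suppose ℏ ≥ 0. Then the unique minimizer v* over ℝ of φ(v) = a·|v| + b·|v − ℏ| + (1/2)·(v − u)² is given by the following piecewise formula: v* = u − a − b if ℏ + a + b < u; v* = ℏ if ℏ + a − b ≤ u ≤ ℏ + a + b; v* = u − a + b if a − b < u < ℏ + a − b; v* = 0 if −(a + b) ≤ u ≤ a − b; and v* = u + a + b if u < −(a + b). -/
/-- `v` is the unique minimizer of `φ` over `ℝ`. -/
def IsUniqueMinimizer (φ : ℝ → ℝ) (v : ℝ) : Prop :=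
  (∀ w : ℝ, φ v ≤ φ w) ∧ ∀ w : ℝ, (∀ z : ℝ, φ w ≤ φ z) → w = v

lemma strong_min (φ : ℝ → ℝ) (v : ℝ)
    (h : ∀ w, φ v + (1/2) * (w - v) ^ 2 ≤ φ w) : IsUniqueMinimizer φ v := by
  constructor
  · intro w
    have := h w
    nlinarith [sq_nonneg (w - v)]
  · intro w hw
    have h1 := h w
    have h2 := hw v
    have h3 : (w - v) ^ 2 ≤ 0 := by nlinarith
    have h4 : (w - v) ^ 2 = 0 := le_antisymm h3 (sq_nonneg _)
    have := pow_eq_zero_iff (n := 2) (by norm_num) |>.mp h4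
    linarith [sub_eq_zero.mp this]

/-- Proposition 1 of the paper, case `hbar ≥ 0`: the piecewise formula for the
unique minimizer of `φ(v) = a·|v| + b·|v − hbar| + (1/2)·(v − u)²`, i.e. for the
proximal operator of the reweighted ℓ1-ℓ1 regularizer. -/
theorem prox_reweighted_l1_l1_formula_of_hbar_nonneg
    (a b hbar u : ℝ) (ha : 0 ≤ a) (hb : 0 ≤ b) (hhbar : 0 ≤ hbar)
    (φ : ℝ → ℝ) (hφ : ∀ v, φ v = a * |v| + b * |v - hbar| + (1 / 2) * (v - u) ^ 2) :
    (hbar + a + b < u → IsUniqueMinimizer φ (u - a - b)) ∧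
    (hbar + a - b ≤ u → u ≤ hbar + a + b → IsUniqueMinimizer φ hbar) ∧
    (a - b < u → u < hbar + a - b → IsUniqueMinimizer φ (u - a + b)) ∧
    (-(a + b) ≤ u → u ≤ a - b → IsUniqueMinimizer φ 0) ∧
    (u < -(a + b) → IsUniqueMinimizer φ (u + a + b)) := by
  refine ⟨?_, ?_, ?_, ?_, ?_⟩
  · -- case 1 : v = u - a - b
    intro h1
    apply strong_min
    intro w
    rw [hφ, hφ]
    have e1 : |u - a - b| = u - a - b := abs_of_nonneg (by linarith)
    have e2 : |u - a - b - hbar| = u - a - b - hbar := abs_of_nonneg (by linarith)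
    rw [e1, e2]
    nlinarith [mul_nonneg ha (sub_nonneg.2 (le_abs_self w)),
      mul_nonneg hb (sub_nonneg.2 (le_abs_self (w - hbar)))]
  · -- case 2 : v = hbar
    intro h1 h2
    apply strong_min
    intro w
    rw [hφ, hφ]
    have e1 : |hbar| = hbar := abs_of_nonneg hhbar
    have e2 : |hbar - hbar| = 0 := by rw [sub_self, abs_zero]
    rw [e1, e2]
    have hub : (u - hbar - a) * (w - hbar) ≤ b * |w - hbar| := by
      calc (u - hbar - a) * (w - hbar) ≤ |(u - hbar - a) * (w - hbar)| := le_abs_self _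
        _ = |u - hbar - a| * |w - hbar| := abs_mul _ _
        _ ≤ b * |w - hbar| :=
          mul_le_mul_of_nonneg_right (abs_le.2 ⟨by linarith, by linarith⟩) (abs_nonneg _)
    nlinarith [hub, mul_nonneg ha (sub_nonneg.2 (le_abs_self w))]
  · -- case 3 : v = u - a + b
    intro h1 h2
    apply strong_min
    intro w
    rw [hφ, hφ]
    have e1 : |u - a + b| = u - a + b := abs_of_nonneg (by linarith)
    have e2 : |u - a + b - hbar| = -(u - a + b - hbar) := abs_of_nonpos (by linarith)
    rw [e1, e2]
    nlinarith [mul_nonneg ha (sub_nonneg.2 (le_abs_self w)),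
      mul_nonneg hb (by linarith [neg_abs_le (w - hbar)] : (0:ℝ) ≤ |w - hbar| + (w - hbar))]
  · -- case 4 : v = 0
    intro h1 h2
    apply strong_min
    intro w
    rw [hφ, hφ]
    have e1 : |(0:ℝ)| = 0 := abs_zero
    have e2 : |(0:ℝ) - hbar| = hbar := by rw [zero_sub, abs_neg, abs_of_nonneg hhbar]
    rw [e1, e2]
    have hua : (u + b) * w ≤ a * |w| := by
      calc (u + b) * w ≤ |(u + b) * w| := le_abs_self _
        _ = |u + b| * |w| := abs_mul _ _
        _ ≤ a * |w| :=
          mul_le_mul_of_nonneg_right (abs_le.2 ⟨by linarith, by linarith⟩) (abs_nonneg _)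
    nlinarith [hua,
      mul_nonneg hb (by linarith [neg_abs_le (w - hbar)] : (0:ℝ) ≤ |w - hbar| + (w - hbar))]
  · -- case 5 : v = u + a + b
    intro h1
    apply strong_min
    intro w
    rw [hφ, hφ]
    have e1 : |u + a + b| = -(u + a + b) := abs_of_nonpos (by linarith)
    have e2 : |u + a + b - hbar| = -(u + a + b - hbar) := abs_of_nonpos (by linarith)
    rw [e1, e2]
    nlinarith [mul_nonneg ha (by linarith [neg_abs_le w] : (0:ℝ) ≤ |w| + w),
      mul_nonneg hb (by linarith [neg_abs_le (w - hbar)] : (0:ℝ) ≤ |w - hbar| + (w - hbar))]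
end

section
/- Suppose ℏ < 0. Then the unique minimizer v* over ℝ of φ(v) = a·|v| + b·|v − ℏ| + (1/2)·(v − u)² is given by the following piecewise formula: v* = u − a − b if a + b < u; v* = 0 if −a + b ≤ u ≤ a + b; v* = u + a − b if ℏ − a + b < u < −a + b; v* = ℏ if ℏ − a − b ≤ u ≤ ℏ − a + b; and v* = u + a + b if u < ℏ − a − b. -/
private lemma unique_of_min (a b hbar u : ℝ) (ha : 0 ≤ a) (hb : 0 ≤ b)
    (φ : ℝ → ℝ) (hφ : ∀ v, φ v = a * |v| + b * |v - hbar| + (1 / 2) * (v - u) ^ 2)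
    (v : ℝ) (hmin : ∀ w, φ v ≤ φ w) : IsUniqueMinimizer φ v := by
  refine ⟨hmin, fun w hw => ?_⟩
  by_contra hne
  have h1 := hmin ((v + w) / 2)
  have h2 := hw v
  have h3 := hmin w
  have hvw : φ v = φ w := le_antisymm h3 h2
  have hm : φ ((v + w) / 2) ≤ (φ v + φ w) / 2 - (v - w) ^ 2 / 8 := by
    rw [hφ, hφ, hφ]
    have e1 : |(v + w) / 2| ≤ (|v| + |w|) / 2 := by
      rw [abs_div]
      have := abs_add_le v w
      simp only [abs_two] at *
      linarith
    have e2 : |(v + w) / 2 - hbar| ≤ (|v - hbar| + |w - hbar|) / 2 := by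
      have h : (v + w) / 2 - hbar = ((v - hbar) + (w - hbar)) / 2 := by ring
      rw [h, abs_div]
      have := abs_add_le (v - hbar) (w - hbar)
      simp only [abs_two] at *
      linarith
    nlinarith [mul_le_mul_of_nonneg_left e1 ha, mul_le_mul_of_nonneg_left e2 hb]
  have hpos : 0 < (v - w) ^ 2 / 8 := by
    have : v - w ≠ 0 := fun h => hne (by linarith [sub_eq_zero.mp h])
    positivity
  rw [hvw] at h1 hm
  linarith

/-- Proposition 1 of the paper, case `hbar < 0`: the piecewise formula for the
unique minimizer of `φ(v) = a·|v| + b·|v − hbar| + (1/2)·(v − u)²`, i.e. for the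
proximal operator of the reweighted ℓ1-ℓ1 regularizer. -/
theorem prox_reweighted_l1_l1_formula_of_hbar_neg
    (a b hbar u : ℝ) (ha : 0 ≤ a) (hb : 0 ≤ b) (hhbar : hbar < 0)
    (φ : ℝ → ℝ) (hφ : ∀ v, φ v = a * |v| + b * |v - hbar| + (1 / 2) * (v - u) ^ 2) :
    (a + b < u → IsUniqueMinimizer φ (u - a - b)) ∧
    (-a + b ≤ u → u ≤ a + b → IsUniqueMinimizer φ 0) ∧
    (hbar - a + b < u → u < -a + b → IsUniqueMinimizer φ (u + a - b)) ∧
    (hbar - a - b ≤ u → u ≤ hbar - a + b → IsUniqueMinimizer φ hbar) ∧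
    (u < hbar - a - b → IsUniqueMinimizer φ (u + a + b)) := by
  refine ⟨fun h1 => unique_of_min a b hbar u ha hb φ hφ _ (fun w => ?_),
    fun h1 h2 => unique_of_min a b hbar u ha hb φ hφ _ (fun w => ?_),
    fun h1 h2 => unique_of_min a b hbar u ha hb φ hφ _ (fun w => ?_),
    fun h1 h2 => unique_of_min a b hbar u ha hb φ hφ _ (fun w => ?_),
    fun h1 => unique_of_min a b hbar u ha hb φ hφ _ (fun w => ?_)⟩ <;>
  rw [hφ, hφ]
  · rw [abs_of_pos (by linarith : (0:ℝ) < u - a - b),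
      abs_of_pos (by linarith : (0:ℝ) < u - a - b - hbar)]
    rcases abs_cases w with ⟨e1, _⟩ | ⟨e1, _⟩ <;>
    rcases abs_cases (w - hbar) with ⟨e2, _⟩ | ⟨e2, _⟩ <;>
    rw [e1, e2] <;> nlinarith [sq_nonneg (w - (u - a - b))]
  · rw [abs_zero, zero_sub, abs_neg, abs_of_neg hhbar]
    rcases abs_cases w with ⟨e1, _⟩ | ⟨e1, _⟩ <;>
    rcases abs_cases (w - hbar) with ⟨e2, _⟩ | ⟨e2, _⟩ <;>
    rw [e1, e2] <;> nlinarith [sq_nonneg w]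
  · rw [abs_of_neg (by linarith : u + a - b < 0),
      abs_of_pos (by linarith : (0:ℝ) < u + a - b - hbar)]
    rcases abs_cases w with ⟨e1, _⟩ | ⟨e1, _⟩ <;>
    rcases abs_cases (w - hbar) with ⟨e2, _⟩ | ⟨e2, _⟩ <;>
    rw [e1, e2] <;> nlinarith [sq_nonneg (w - (u + a - b))]
  · rw [abs_of_neg hhbar, sub_self, abs_zero]
    rcases abs_cases w with ⟨e1, _⟩ | ⟨e1, _⟩ <;>
    rcases abs_cases (w - hbar) with ⟨e2, _⟩ | ⟨e2, _⟩ <;>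
    rw [e1, e2] <;> nlinarith [sq_nonneg (w - hbar)]
  · rw [abs_of_neg (by linarith : u + a + b < 0),
      abs_of_neg (by linarith : u + a + b - hbar < 0)]
    rcases abs_cases w with ⟨e1, _⟩ | ⟨e1, _⟩ <;>
    rcases abs_cases (w - hbar) with ⟨e2, _⟩ | ⟨e2, _⟩ <;>
    rw [e1, e2] <;> nlinarith [sq_nonneg (w - (u + a + b))]
end

section
/- Suppose ℏ ≥ 0 and ℏ + a − b ≤ u ≤ ℏ + a + b. Then v = ℏ minimizes φ, i.e., φ(ℏ) ≤ φ(v) for all v ∈ ℝ, where φ(v) = a·|v| + b·|v − ℏ| + (1/2)·(v − u)². -/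
/-- Proposition 1 (case `hbar ≥ 0`), intermediate claim: if
`hbar + a - b ≤ u ≤ hbar + a + b`, then `v = hbar` minimizes
`φ(v) = a·|v| + b·|v − hbar| + (1/2)·(v − u)²`. -/
theorem prox_reweighted_l1_l1_hbar_of_hbar_nonneg
    (a b hbar u : ℝ) (ha : 0 ≤ a) (hb : 0 ≤ b) (hhbar : 0 ≤ hbar)
    (h1 : hbar + a - b ≤ u) (h2 : u ≤ hbar + a + b) :
    ∀ v : ℝ,
      a * |hbar| + b * |hbar - hbar| + (1 / 2) * (hbar - u) ^ 2 ≤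
        a * |v| + b * |v - hbar| + (1 / 2) * (v - u) ^ 2 := by
  intro v
  rw [abs_of_nonneg hhbar, sub_self, abs_zero]
  rcases abs_cases v with ⟨hv, _⟩ | ⟨hv, hv0⟩ <;>
    rcases abs_cases (v - hbar) with ⟨hw, _⟩ | ⟨hw, hw0⟩ <;>
      rw [hv, hw] <;> nlinarith [sq_nonneg (v - hbar), sq_nonneg v]
end

section
/- Suppose ℏ < 0 and −a + b ≤ u ≤ a + b. Then v = 0 minimizes φ, i.e., φ(0) ≤ φ(v) for all v ∈ ℝ, where φ(v) = a·|v| + b·|v − ℏ| + (1/2)·(v − u)². -/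
/-- Proposition 1 (case `hbar < 0`), claim: if `-a + b ≤ u ≤ a + b`,
then `v = 0` minimizes `φ(v) = a·|v| + b·|v − hbar| + (1/2)·(v − u)²`. -/
theorem prox_reweighted_l1_l1_zero_of_hbar_neg
    (a b hbar u : ℝ) (ha : 0 ≤ a) (hb : 0 ≤ b) (hhbar : hbar < 0)
    (h1 : -a + b ≤ u) (h2 : u ≤ a + b) :
    ∀ v : ℝ,
      a * |(0 : ℝ)| + b * |(0 : ℝ) - hbar| + (1 / 2) * ((0 : ℝ) - u) ^ 2 ≤
        a * |v| + b * |v - hbar| + (1 / 2) * (v - u) ^ 2 := by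
  intro v
  have h0 : |(0:ℝ)| = 0 := abs_zero
  have hh : |(0:ℝ) - hbar| = -hbar := by
    rw [zero_sub, abs_neg, abs_of_neg hhbar]
  rw [h0, hh]
  have hv1 : v ≤ |v| := le_abs_self v
  have hv2 : -v ≤ |v| := neg_le_abs v
  have hw : v - hbar ≤ |v - hbar| := le_abs_self _
  rcases le_or_gt 0 v with h | h
  · rw [abs_of_nonneg h]
    nlinarith
  · rw [abs_of_neg h]
    nlinarith
end

section
/- Suppose ℏ < 0 and ℏ − a − b ≤ u ≤ ℏ − a + b. Then v = ℏ minimizes φ, i.e., φ(ℏ) ≤ φ(v) for all v ∈ ℝ, where φ(v) = a·|v| + b·|v − ℏ| + (1/2)·(v − u)². -/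
/-- Proposition 1 (case `hbar < 0`), claim: if `hbar - a - b ≤ u ≤ hbar - a + b`,
then `v = hbar` minimizes `φ(v) = a·|v| + b·|v − hbar| + (1/2)·(v − u)²`. -/
theorem prox_reweighted_l1_l1_hbar_of_hbar_neg
    (a b hbar u : ℝ) (ha : 0 ≤ a) (hb : 0 ≤ b) (hhbar : hbar < 0)
    (h1 : hbar - a - b ≤ u) (h2 : u ≤ hbar - a + b) :
    ∀ v : ℝ,
      a * |hbar| + b * |hbar - hbar| + (1 / 2) * (hbar - u) ^ 2 ≤
        a * |v| + b * |v - hbar| + (1 / 2) * (v - u) ^ 2 := by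
  intro v
  rcases abs_cases v with ⟨hv, hv'⟩ | ⟨hv, hv'⟩ <;>
  rcases abs_cases (v - hbar) with ⟨hw, hw'⟩ | ⟨hw, hw'⟩ <;>
  rw [hv, hw] <;>
  simp only [sub_self, abs_zero, abs_of_neg hhbar] <;>
  nlinarith [sq_nonneg (v - hbar), mul_nonneg ha (le_of_lt (neg_pos.mpr hhbar))]
end
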